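/- Let p, r, s, τ be real numbers with s ≠ 0, and define h = (p² − τ)/(2s) + s, k = (τ² − 2p²τ + r⁴)/(4s²) + τ, g = (p⁴ − r⁴)/(4s) + (p² − τ)s/2. Then the polynomial ψ(w) = w²(w − h)² + (p² − k)w² − 2g·w + (p⁴ − r⁴)/4 satisfies ψ(s) = 0 and ψ'(s) = 0, i.e., s is a multiple root of ψ. -/

import Mathlib

/-- For `h = (p² - τ)/(2s) + s`, `k = (τ² - 2p²τ + r⁴)/(4s²) + τ`,
`g = (p⁴ - r⁴)/(4s) + (p² - τ)s/2`, the polynomial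
`ψ(w) = w²(w - h)² + (p² - k)w² - 2gw + (p⁴ - r⁴)/4` has `s` as a multiple root:
`ψ(s) = 0` and `ψ'(s) = 0`. -/
theorem stmt_8
    (p r s τ : ℝ) (hs : s ≠ 0)
    (h k g : ℝ)
    (hh : h = (p ^ 2 - τ) / (2 * s) + s)
    (hk : k = (τ ^ 2 - 2 * p ^ 2 * τ + r ^ 4) / (4 * s ^ 2) + τ)
    (hg : g = (p ^ 4 - r ^ 4) / (4 * s) + (p ^ 2 - τ) * s / 2)
    (ψ : ℝ → ℝ)
    (hψ : ψ = fun w => w ^ 2 * (w - h) ^ 2 + (p ^ 2 - k) * w ^ 2 - 2 * g * w +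
      (p ^ 4 - r ^ 4) / 4) :
    ψ s = 0 ∧ HasDerivAt ψ 0 s := by
  subst hψ hh hk hg
  constructor
  · field_simp
    ring
  · have hD : HasDerivAt (fun w : ℝ => w ^ 2 * (w - ((p ^ 2 - τ) / (2 * s) + s)) ^ 2 +
        (p ^ 2 - ((τ ^ 2 - 2 * p ^ 2 * τ + r ^ 4) / (4 * s ^ 2) + τ)) * w ^ 2 -
        2 * ((p ^ 4 - r ^ 4) / (4 * s) + (p ^ 2 - τ) * s / 2) * w +
        (p ^ 4 - r ^ 4) / 4)
        ((2 * s * (s - ((p ^ 2 - τ) / (2 * s) + s)) ^ 2 +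
          s ^ 2 * (2 * (s - ((p ^ 2 - τ) / (2 * s) + s))) +
          (p ^ 2 - ((τ ^ 2 - 2 * p ^ 2 * τ + r ^ 4) / (4 * s ^ 2) + τ)) * (2 * s)) -
          2 * ((p ^ 4 - r ^ 4) / (4 * s) + (p ^ 2 - τ) * s / 2) + 0) s := by
      exact (((((hasDerivAt_pow 2 s).mul
        (((hasDerivAt_id s).sub_const _).pow 2)).add
        ((hasDerivAt_pow 2 s).const_mul _)).sub
        ((hasDerivAt_id s).const_mul _)).add_const _).congr_deriv (by simp only [id_eq]; norm_num)
    convert hD using 1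
    field_simp
    ring
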